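/- Let x, y, z, w be positive integers, and let Γ_XY (x×y), Γ_XZ (x×z), Γ_XW (x×w), Γ_ZY (z×y), Γ_ZZ (z×z), Γ_ZW (z×w) be real matrices, where Γ_ZZ is symmetric positive definite. Then the 2×3 block matrix Ξ = [[Γ_XY, Γ_XZ, Γ_XW],[Γ_ZY, Γ_ZZ, Γ_ZW]] (of size (x+z)×(y+z+w)) has rank equal to z if and only if both matrix equations Γ_XY = Γ_XZ · Γ_ZZ⁻¹ · Γ_ZY and Γ_XW = Γ_XZ · Γ_ZZ⁻¹ · Γ_ZW hold. -/

import Mathlib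

open Matrix

/-- For real matrices with `ΓZZ` symmetric positive definite, the 2×3 block
matrix `Ξ = [[ΓXY, ΓXZ, ΓXW], [ΓZY, ΓZZ, ΓZW]]` has rank `z` if and only if
`ΓXY = ΓXZ ΓZZ⁻¹ ΓZY` and `ΓXW = ΓXZ ΓZZ⁻¹ ΓZW`. -/
theorem stmt_0 (x y z w : ℕ) (hx : 0 < x) (hy : 0 < y) (hz : 0 < z) (hw : 0 < w)
    (ΓXY : Matrix (Fin x) (Fin y) ℝ) (ΓXZ : Matrix (Fin x) (Fin z) ℝ)
    (ΓXW : Matrix (Fin x) (Fin w) ℝ) (ΓZY : Matrix (Fin z) (Fin y) ℝ)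
    (ΓZZ : Matrix (Fin z) (Fin z) ℝ) (ΓZW : Matrix (Fin z) (Fin w) ℝ)
    (hZZ : ΓZZ.PosDef) :
    (Matrix.fromBlocks ΓXY (Matrix.fromCols ΓXZ ΓXW) ΓZY
        (Matrix.fromCols ΓZZ ΓZW)).rank = z ↔
      (ΓXY = ΓXZ * ΓZZ⁻¹ * ΓZY ∧ ΓXW = ΓXZ * ΓZZ⁻¹ * ΓZW) := by
  have hdet : IsUnit ΓZZ.det := (ne_of_gt hZZ.det_pos).isUnit
  set Ξ : Matrix (Fin x ⊕ Fin z) (Fin y ⊕ (Fin z ⊕ Fin w)) ℝ :=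
    Matrix.fromBlocks ΓXY (Matrix.fromCols ΓXZ ΓXW) ΓZY
      (Matrix.fromCols ΓZZ ΓZW) with hΞ
  set T : Matrix (Fin x) (Fin y ⊕ (Fin z ⊕ Fin w)) ℝ :=
    Matrix.fromCols ΓXY (Matrix.fromCols ΓXZ ΓXW) with hT
  set R : Matrix (Fin z) (Fin y ⊕ (Fin z ⊕ Fin w)) ℝ :=
    Matrix.fromCols ΓZY (Matrix.fromCols ΓZZ ΓZW) with hR
  have hΞTR : Ξ = Matrix.fromRows T R := by
    rw [hΞ, hT, hR, Matrix.fromRows_fromCols_eq_fromBlocks]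
  -- column selection matrix extracting the ΓZZ block
  have E : Matrix (Fin y ⊕ (Fin z ⊕ Fin w)) (Fin z) ℝ :=
    Matrix.of fun j k => if j = Sum.inr (Sum.inl k) then 1 else 0
  set E : Matrix (Fin y ⊕ (Fin z ⊕ Fin w)) (Fin z) ℝ :=
    Matrix.of fun j k => if j = Sum.inr (Sum.inl k) then 1 else 0 with hE
  have hRE : R * E = ΓZZ := by
    ext i k
    simp only [Matrix.mul_apply, hE, Matrix.of_apply, mul_ite, mul_one, mul_zero]
    rw [Finset.sum_ite_eq' Finset.univ (Sum.inr (Sum.inl k)) (fun j => R i j)]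
    simp [hR]
  have hZZrank : ΓZZ.rank = z := by
    rw [Matrix.rank_of_isUnit ΓZZ ((Matrix.isUnit_iff_isUnit_det _).mpr hdet)]
    simp
  have hRrank : R.rank = z := by
    refine le_antisymm (by simpa using R.rank_le_card_height) ?_
    calc z = (R * E).rank := by rw [hRE, hZZrank]
      _ ≤ R.rank := Matrix.rank_mul_le_left R E
  constructor
  · intro hrank
    -- row space argument via transposes
    have hle : LinearMap.range Rᵀ.mulVecLin ≤ LinearMap.range Ξᵀ.mulVecLin := by
      rintro _ ⟨v, rfl⟩
      refine ⟨Sum.elim 0 v, ?_⟩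
      ext j
      simp only [Matrix.mulVecLin_apply, Matrix.mulVec, dotProduct,
        Fintype.sum_sum_type, Matrix.transpose_apply, Sum.elim_inl, Sum.elim_inr,
        Pi.zero_apply, mul_zero, Finset.sum_const_zero, zero_add]
      refine Finset.sum_congr rfl fun i _ => ?_
      rw [hΞTR, Matrix.fromRows_apply_inr]
    have hfin : FiniteDimensional ℝ (LinearMap.range Ξᵀ.mulVecLin) :=
      FiniteDimensional.finiteDimensional_submodule _
    have heq : LinearMap.range Rᵀ.mulVecLin = LinearMap.range Ξᵀ.mulVecLin := by
      apply Submodule.eq_of_le_of_finrank_le hle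
      have h1 : Module.finrank ℝ (LinearMap.range Ξᵀ.mulVecLin) = z := by
        rw [← Matrix.rank, Matrix.rank_transpose, hrank]
      have h2 : Module.finrank ℝ (LinearMap.range Rᵀ.mulVecLin) = z := by
        rw [← Matrix.rank, Matrix.rank_transpose, hRrank]
      rw [h1, h2]
    -- each top row lies in the row space of R
    have hrow : ∀ i : Fin x, ∃ v : Fin z → ℝ, Rᵀ *ᵥ v = fun j => Ξ (Sum.inl i) j := by
      intro i
      have : (fun j => Ξ (Sum.inl i) j) ∈ LinearMap.range Ξᵀ.mulVecLin := by
        refine ⟨Pi.single (Sum.inl i) 1, ?_⟩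
        ext j
        simp [Matrix.mulVecLin_apply, Matrix.mulVec_single]
      rw [← heq] at this
      obtain ⟨v, hv⟩ := this
      exact ⟨v, hv⟩
    choose V hV using hrow
    set M : Matrix (Fin x) (Fin z) ℝ := Matrix.of V with hM
    have hMR : M * R = T := by
      ext i j
      have := congrFun (hV i) j
      simp only [Matrix.mulVec, dotProduct, Matrix.transpose_apply] at this
      rw [Matrix.mul_apply]
      rw [hΞTR, Matrix.fromRows_apply_inl] at this
      rw [← this]
      exact Finset.sum_congr rfl fun k _ => mul_comm _ _
    rw [hR, hT, Matrix.mul_fromCols, Matrix.mul_fromCols] at hMR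
    have h1 : M * ΓZY = ΓXY := by
      ext i j; simpa using congrFun (congrFun hMR i) (Sum.inl j)
    have h2 : M * ΓZZ = ΓXZ := by
      ext i j; simpa using congrFun (congrFun hMR i) (Sum.inr (Sum.inl j))
    have h3 : M * ΓZW = ΓXW := by
      ext i j; simpa using congrFun (congrFun hMR i) (Sum.inr (Sum.inr j))
    have hMeq : ΓXZ * ΓZZ⁻¹ = M := by
      rw [← h2, Matrix.mul_assoc, Matrix.mul_nonsing_inv _ hdet, Matrix.mul_one]
    exact ⟨by rw [hMeq, h1], by rw [hMeq, h3]⟩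
  · intro ⟨h1, h2⟩
    set C : Matrix (Fin x) (Fin z) ℝ := ΓXZ * ΓZZ⁻¹ with hC
    have hCZZ : C * ΓZZ = ΓXZ := by
      rw [hC, Matrix.mul_assoc, Matrix.nonsing_inv_mul _ hdet, Matrix.mul_one]
    have hfact : Ξ = Matrix.fromRows C (1 : Matrix (Fin z) (Fin z) ℝ) * R := by
      rw [Matrix.fromRows_mul, Matrix.one_mul, hΞTR, hR, hT,
        Matrix.mul_fromCols, Matrix.mul_fromCols, hCZZ]
      rw [hC, ← h1, ← h2]
    set P : Matrix (Fin z) (Fin x ⊕ Fin z) ℝ :=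
      Matrix.of fun k i => if i = Sum.inr k then 1 else 0 with hP
    have hPΞ : P * Ξ = R := by
      ext k j
      simp only [Matrix.mul_apply, hP, Matrix.of_apply, ite_mul, one_mul, zero_mul]
      rw [Finset.sum_ite_eq' Finset.univ (Sum.inr k) (fun i => Ξ i j)]
      simp [hΞTR]
    refine le_antisymm ?_ ?_
    · calc Ξ.rank ≤ R.rank := by rw [hfact]; exact Matrix.rank_mul_le_right _ R
        _ = z := hRrank
    · calc z = (P * Ξ * E).rank := by rw [hPΞ, hRE, hZZrank]
        _ ≤ (P * Ξ).rank := Matrix.rank_mul_le_left _ E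
        _ ≤ Ξ.rank := Matrix.rank_mul_le_right P Ξ
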